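/- Let p > 3 be a prime and let G = Φ₃₃(1⁶) be the group of order p⁶ with presentation on generators α, α₁, α₂, β₁, β₂, γ and relations [α₁,α] = β₁, [α₂,α] = β₂, [α₁,β₁] = γ, [β₂,α] = γ, αᵖ = α₁ᵖ = 1, α₂ᵖ·γ^C(p,3) = 1, β₁ᵖ = β₂ᵖ = γᵖ = 1, with every commutator of a pair of generators not listed among these relations declared trivial. Then the Bogomolov multiplier B₀(G) is trivial. -/

import Mathlib

/-!
Φ₃₃(1⁶): relations [α₁,α]=β₁, [α₂,α]=β₂, [α₁,β₁]=γ, [β₂,α]=γ, αᵖ=α₁ᵖ=1,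
α₂ᵖγ^C(p,3)=1, β₁ᵖ=β₂ᵖ=γᵖ=1.
-/

namespace Stmt9

/-- The additive group `ℚ/ℤ`. -/
abbrev QZ : Type := ℚ ⧸ AddSubgroup.zmultiples (1 : ℚ)

/-- An inhomogeneous 2-cocycle on `G` with values in `ℚ/ℤ` (trivial `G`-action). -/
def IsTwoCocycle {G : Type} [Group G] (f : G → G → QZ) : Prop :=
  ∀ g h j : G, f h j - f (g * h) j + f g (h * j) - f g h = 0

/-- An inhomogeneous 2-coboundary on `G` with values in `ℚ/ℤ` (trivial `G`-action). -/
def IsTwoCoboundary {G : Type} [Group G] (f : G → G → QZ) : Prop :=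
  ∃ c : G → QZ, ∀ g h : G, f g h = c h - c (g * h) + c g

/-- A subgroup is bicyclic if it is abelian and generated by at most two elements
(equivalently, cyclic or a direct product of two cyclic groups). -/
def IsBicyclic {G : Type} [Group G] (A : Subgroup G) : Prop :=
  (∀ x y : A, x * y = y * x) ∧ ∃ a b : G, A = Subgroup.closure {a, b}

/-- The Bogomolov multiplier `B₀(G) ⊆ H²(G, ℚ/ℤ)` is trivial, phrased at the level of
2-cocycles: every 2-cocycle whose restriction to each bicyclic subgroup is a coboundary
(i.e. whose class restricts to zero on each bicyclic subgroup) is itself a coboundary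
(i.e. its class is zero). -/
def BogomolovMultiplierIsTrivial (G : Type) [Group G] : Prop :=
  ∀ f : G → G → QZ, IsTwoCocycle f →
    (∀ A : Subgroup G, IsBicyclic A → IsTwoCoboundary (fun a b : ↥A => f ↑a ↑b)) →
    IsTwoCoboundary f

/-- The Bogomolov multiplier `B₀(G) ⊆ H²(G, ℚ/ℤ)` is nontrivial, phrased at the level of
2-cocycles. -/
def BogomolovMultiplierIsNontrivial (G : Type) [Group G] : Prop :=
  ∃ f : G → G → QZ, IsTwoCocycle f ∧
    (∀ A : Subgroup G, IsBicyclic A → IsTwoCoboundary (fun a b : ↥A => f ↑a ↑b)) ∧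
    ¬ IsTwoCoboundary f

/-- The generators. -/
inductive Gen | a | a1 | a2 | b1 | b2 | g

open FreeGroup

/-- The commutator `[x,y] = x⁻¹y⁻¹xy`. -/
def c (x y : FreeGroup Gen) : FreeGroup Gen := x⁻¹ * y⁻¹ * x * y

/-- The defining relators. -/
def rels (p : ℕ) : Set (FreeGroup Gen) :=
  { c (of .a1) (of .a) * (of Gen.b1)⁻¹,
    c (of .a2) (of .a) * (of Gen.b2)⁻¹,
    c (of .a1) (of .b1) * (of Gen.g)⁻¹,
    c (of .b2) (of .a) * (of Gen.g)⁻¹,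
    c (of .a) (of .b1),
    c (of .a) (of .g),
    c (of .a1) (of .a2),
    c (of .a1) (of .b2),
    c (of .a1) (of .g),
    c (of .a2) (of .b1),
    c (of .a2) (of .b2),
    c (of .a2) (of .g),
    c (of .b1) (of .b2),
    c (of .b1) (of .g),
    c (of .b2) (of .g),
    (of Gen.a) ^ p,
    (of Gen.a1) ^ p,
    (of Gen.a2) ^ p * (of Gen.g) ^ (p.choose 3),
    (of Gen.b1) ^ p,
    (of Gen.b2) ^ p,
    (of Gen.g) ^ p }

/-! ### Auxiliary lemmas -/

lemma QZ_div (n : ℕ) (hn : n ≠ 0) (t : QZ) : ∃ s : QZ, n • s = t := by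
  obtain ⟨q, rfl⟩ := QuotientAddGroup.mk_surjective t
  refine ⟨QuotientAddGroup.mk (q / n), ?_⟩
  rw [← QuotientAddGroup.mk_nsmul]
  congr 1
  rw [nsmul_eq_mul]; field_simp [Nat.cast_ne_zero.mpr hn]

section GroupCalc

variable {H : Type*} [Group H]

lemma conj_pow_eq' (X z : H) (n : ℕ) : X⁻¹ * z ^ n * X = (X⁻¹ * z * X) ^ n := by
  induction n with
  | zero => simp
  | succ n ih =>
    calc X⁻¹ * z ^ (n+1) * X = (X⁻¹ * z ^ n * X) * (X⁻¹ * z * X) := by rw [pow_succ]; group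
      _ = (X⁻¹ * z * X) ^ n * (X⁻¹ * z * X) := by rw [ih]
      _ = (X⁻¹ * z * X) ^ (n+1) := by rw [← pow_succ]

lemma conj_fix (X B : H) (hc : B * X = X * B) : X⁻¹ * B * X = B := by
  rw [mul_assoc, hc]; group

lemma conj_pow_series (X Y B : H) (h1 : X⁻¹ * Y * X = Y * B) (hc : B * X = X * B) :
    ∀ n : ℕ, (X ^ n)⁻¹ * Y * X ^ n = Y * B ^ n := by
  intro n
  induction n with
  | zero => simp
  | succ n ih =>
    have hBX : X⁻¹ * B ^ n * X = B ^ n := by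
      rw [conj_pow_eq', conj_fix X B hc]
    calc (X ^ (n+1))⁻¹ * Y * X ^ (n+1)
        = X⁻¹ * ((X ^ n)⁻¹ * Y * X ^ n) * X := by rw [pow_succ]; group
      _ = X⁻¹ * (Y * B ^ n) * X := by rw [ih]
      _ = (X⁻¹ * Y * X) * (X⁻¹ * B ^ n * X) := by group
      _ = Y * B * B ^ n := by rw [h1, hBX]
      _ = Y * (B * B ^ n) := by group
      _ = Y * B ^ (n+1) := by rw [← pow_succ']

lemma L1 (p : ℕ) (X Y B : H) (h1 : X⁻¹ * Y * X = Y * B) (hc : B * X = X * B)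
    (hX : X ^ p = 1) : B ^ p = 1 := by
  have h := conj_pow_series X Y B h1 hc p
  rw [hX] at h
  have h2 : Y = Y * B ^ p := by
    calc Y = 1⁻¹ * Y * 1 := by group
      _ = Y * B ^ p := h
  exact (left_eq_mul.mp h2)

lemma conj_pow_series2 (X Y B D : H) (h1 : X⁻¹ * Y * X = Y * B) (h2 : X⁻¹ * B * X = B * D)
    (hBD : B * D = D * B) (hDX : D * X = X * D) :
    ∀ n : ℕ, (X ^ n)⁻¹ * Y * X ^ n = Y * B ^ n * D ^ (n.choose 2) := by
  intro n
  induction n with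
  | zero => simp
  | succ n ih =>
    have hDfix : X⁻¹ * D ^ (n.choose 2) * X = D ^ (n.choose 2) := by
      rw [conj_pow_eq', conj_fix X D hDX]
    have hcomBD : Commute B D := hBD
    have hBn : X⁻¹ * B ^ n * X = B ^ n * D ^ n := by
      rw [conj_pow_eq', h2, hcomBD.mul_pow]
    have hchoose : (n+1).choose 2 = n + n.choose 2 := by
      rw [Nat.choose_succ_succ n 1, Nat.choose_one_right]
    calc (X ^ (n+1))⁻¹ * Y * X ^ (n+1)
        = X⁻¹ * ((X ^ n)⁻¹ * Y * X ^ n) * X := by rw [pow_succ]; group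
      _ = X⁻¹ * (Y * B ^ n * D ^ (n.choose 2)) * X := by rw [ih]
      _ = (X⁻¹ * Y * X) * (X⁻¹ * B ^ n * X) * (X⁻¹ * D ^ (n.choose 2) * X) := by group
      _ = (Y * B) * (B ^ n * D ^ n) * D ^ (n.choose 2) := by rw [h1, hBn, hDfix]
      _ = Y * (B * B ^ n) * (D ^ n * D ^ (n.choose 2)) := by group
      _ = Y * B ^ (n+1) * D ^ ((n+1).choose 2) := by rw [pow_succ' B n, hchoose, pow_add D]

lemma L2 (p : ℕ) (X Y B D : H) (h1 : X⁻¹ * Y * X = Y * B) (h2 : X⁻¹ * B * X = B * D)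
    (hBD : B * D = D * B) (hDX : D * X = X * D) (hX : X ^ p = 1) :
    B ^ p * D ^ (p.choose 2) = 1 := by
  have h := conj_pow_series2 X Y B D h1 h2 hBD hDX p
  rw [hX] at h
  have h3 : Y = Y * (B ^ p * D ^ (p.choose 2)) := by
    calc Y = 1⁻¹ * Y * 1 := by group
      _ = Y * B ^ p * D ^ (p.choose 2) := h
      _ = Y * (B ^ p * D ^ (p.choose 2)) := by group
  exact (left_eq_mul.mp h3)

lemma eqK_of_rel (x y z : H) (h : x⁻¹ * y⁻¹ * x * y * z⁻¹ = 1) : x⁻¹ * y⁻¹ * x * y = z :=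
  mul_inv_eq_one.mp h

lemma xy_of_K (x y z : H) (h : x⁻¹ * y⁻¹ * x * y = z) : x * y = y * x * z := by
  rw [← h]; group

lemma K_conj (x y z : H) (h : x⁻¹ * y⁻¹ * x * y = z) : y⁻¹ * x * y = x * z := by
  rw [← h]; group

lemma rel_of_comm (x y : H) (h : x * y = y * x) : x⁻¹ * y⁻¹ * x * y = 1 := by
  calc x⁻¹ * y⁻¹ * x * y = x⁻¹ * y⁻¹ * (x * y) := by group
    _ = x⁻¹ * y⁻¹ * (y * x) := by rw [h]
    _ = 1 := by group

lemma comm_of_rel (x y : H) (h : x⁻¹ * y⁻¹ * x * y = 1) : x * y = y * x := by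
  have h2 := xy_of_K x y 1 h
  rw [mul_one] at h2
  exact h2

lemma Lmain (A A1 B1 B2 Γ Δ : H)
    (h1 : A1 * B1 = B1 * A1 * Γ)
    (h2 : B2 * A = A * B2 * Δ)
    (h3 : B2 * A1 = A1 * B2)
    (h4 : Γ * A = A * Γ)
    (h5 : B1 * A = A * B1)
    (h6 : Δ * B1 = B1 * Δ) :
    B2 * B1 * (A1 * A) = A1 * A * (B2 * B1) * (Δ * Γ⁻¹) := by
  have hB1A1 : B1 * A1 = A1 * B1 * Γ⁻¹ := by rw [h1]; group
  have hGA : Γ⁻¹ * A = A * Γ⁻¹ := ((show Commute Γ A from h4).inv_left).eq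
  calc B2 * B1 * (A1 * A)
      = B2 * (B1 * A1) * A := by group
    _ = B2 * (A1 * B1 * Γ⁻¹) * A := by rw [hB1A1]
    _ = (B2 * A1) * (B1 * (Γ⁻¹ * A)) := by group
    _ = (A1 * B2) * (B1 * (A * Γ⁻¹)) := by rw [h3, hGA]
    _ = A1 * B2 * (B1 * A) * Γ⁻¹ := by group
    _ = A1 * B2 * (A * B1) * Γ⁻¹ := by rw [h5]
    _ = A1 * (B2 * A) * (B1 * Γ⁻¹) := by group
    _ = A1 * (A * B2 * Δ) * (B1 * Γ⁻¹) := by rw [h2]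
    _ = A1 * A * B2 * (Δ * B1) * Γ⁻¹ := by group
    _ = A1 * A * B2 * (B1 * Δ) * Γ⁻¹ := by rw [h6]
    _ = A1 * A * (B2 * B1) * (Δ * Γ⁻¹) := by group

lemma Lkey (A A1 B1 B2 Γ Δ : H)
    (h1 : A1 * B1 = B1 * A1 * Γ)
    (h2 : B2 * A = A * B2 * Δ)
    (h3 : B2 * A1 = A1 * B2)
    (h4 : Γ * A = A * Γ)
    (h5 : B1 * A = A * B1)
    (h6 : Δ * B1 = B1 * Δ)
    (h7 : B2 * B1 * (A1 * A) = A1 * A * (B2 * B1)) :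
    Δ = Γ := by
  have e2 := Lmain A A1 B1 B2 Γ Δ h1 h2 h3 h4 h5 h6
  rw [h7] at e2
  exact mul_inv_eq_one.mp (left_eq_mul.mp e2)

end GroupCalc

theorem bogomolov_trivial_Phi33 (p : ℕ) (hp : p.Prime) (h3 : 3 < p)
    (hcard : Nat.card (PresentedGroup (rels p)) = p ^ 6) :
    BogomolovMultiplierIsTrivial (PresentedGroup (rels p)) := by
  intro f hf H
  -- cocycle normalization
  have hfe1 : ∀ y : PresentedGroup (rels p), f 1 y = f 1 1 := by
    intro y
    have h := hf 1 1 y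
    rw [one_mul, one_mul] at h
    have h2 : f 1 y - f 1 1 = 0 := by
      calc f 1 y - f 1 1 = f 1 y - f 1 y + f 1 y - f 1 1 := by abel
        _ = 0 := h
    exact sub_eq_zero.mp h2
  -- symmetry of f on commuting pairs, from the bicyclic hypothesis
  have K1 : ∀ x y : PresentedGroup (rels p), x * y = y * x → f x y = f y x := by
    intro x y hxy
    have hx : x ∈ Subgroup.closure {x, y} := Subgroup.subset_closure (Set.mem_insert _ _)
    have hy : y ∈ Subgroup.closure {x, y} :=
      Subgroup.subset_closure (Set.mem_insert_of_mem _ rfl)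
    have hbi : IsBicyclic (Subgroup.closure {x, y}) := by
      constructor
      · intro u v
        have key : ∀ s t : PresentedGroup (rels p), s ∈ Subgroup.closure {x, y} →
            t ∈ Subgroup.closure {x, y} → Commute s t := by
          intro s t hs ht
          refine Subgroup.closure_induction₂ (p := fun s t _ _ => Commute s t)
            ?_ ?_ ?_ ?_ ?_ ?_ ?_ hs ht
          · intro s t hs' ht'
            simp only [Set.mem_insert_iff, Set.mem_singleton_iff] at hs' ht'
            rcases hs' with rfl | rfl <;> rcases ht' with rfl | rfl
            · exact Commute.refl _
            · exact hxy
            · exact hxy.symm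
            · exact Commute.refl _
          · intro s _; exact Commute.one_left s
          · intro s _; exact Commute.one_right s
          · intro x' y' z' _ _ _ h1 h2; exact h1.mul_left h2
          · intro y' z' x' _ _ _ h1 h2; exact h1.mul_right h2
          · intro x' y' _ _ h1; exact h1.inv_left
          · intro x' y' _ _ h1; exact h1.inv_right
        exact Subtype.ext (key ↑u ↑v u.2 v.2)
      · exact ⟨x, y, rfl⟩
    obtain ⟨cc, hcc⟩ := H _ hbi
    have e1 := hcc ⟨x, hx⟩ ⟨y, hy⟩
    have e2 := hcc ⟨y, hy⟩ ⟨x, hx⟩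
    dsimp only at e1 e2
    have hsub : (⟨x, hx⟩ * ⟨y, hy⟩ : Subgroup.closure {x, y}) = ⟨y, hy⟩ * ⟨x, hx⟩ :=
      Subtype.ext hxy
    rw [hsub] at e1
    rw [e1, e2]
    abel
  -- the central extension E = QZ x G with multiplication twisted by f
  letI : Mul (QZ × PresentedGroup (rels p)) :=
    ⟨fun u v => (u.1 + v.1 + f u.2 v.2, u.2 * v.2)⟩
  letI : One (QZ × PresentedGroup (rels p)) := ⟨(- f 1 1, 1)⟩
  letI : Inv (QZ × PresentedGroup (rels p)) :=
    ⟨fun u => (- u.1 - f u.2⁻¹ u.2 - f 1 1, u.2⁻¹)⟩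
  letI instE : Group (QZ × PresentedGroup (rels p)) := Group.ofLeftAxioms
    (by
      intro u v w
      refine Prod.ext ?_ ?_
      · show u.1 + v.1 + f u.2 v.2 + w.1 + f (u.2 * v.2) w.2
            = u.1 + (v.1 + w.1 + f v.2 w.2) + f u.2 (v.2 * w.2)
        have h := hf u.2 v.2 w.2
        have e : u.1 + v.1 + f u.2 v.2 + w.1 + f (u.2 * v.2) w.2
            - (u.1 + (v.1 + w.1 + f v.2 w.2) + f u.2 (v.2 * w.2))
            = -(f v.2 w.2 - f (u.2 * v.2) w.2 + f u.2 (v.2 * w.2) - f u.2 v.2) := by abel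
        rw [h, neg_zero] at e
        exact sub_eq_zero.mp e
      · show u.2 * v.2 * w.2 = u.2 * (v.2 * w.2)
        exact mul_assoc _ _ _)
    (by
      intro u
      refine Prod.ext ?_ ?_
      · show - f 1 1 + u.1 + f 1 u.2 = u.1
        rw [hfe1 u.2]
        abel
      · exact one_mul u.2)
    (by
      intro u
      refine Prod.ext ?_ ?_
      · show - u.1 - f u.2⁻¹ u.2 - f 1 1 + u.1 + f u.2⁻¹ u.2 = - f 1 1
        abel
      · exact inv_mul_cancel u.2)
  -- the projection homomorphism
  obtain ⟨π, hπ⟩ : ∃ π' : (QZ × PresentedGroup (rels p)) →* PresentedGroup (rels p),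
      ∀ u : QZ × PresentedGroup (rels p), π' u = u.2 :=
    ⟨{ toFun := Prod.snd, map_one' := rfl, map_mul' := fun _ _ => rfl }, fun _ => rfl⟩
  have hπpair : ∀ (w : QZ) (x : PresentedGroup (rels p)), π ((w, x)) = x :=
    fun w x => (hπ _).trans rfl
  have fstmul : ∀ u v : QZ × PresentedGroup (rels p),
      (u * v).1 = u.1 + v.1 + f u.2 v.2 := fun _ _ => rfl
  -- lifts of commuting elements commute
  have C : ∀ u v : QZ × PresentedGroup (rels p), π u * π v = π v * π u → u * v = v * u := by
    intro u v h
    rw [hπ, hπ] at h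
    refine Prod.ext ?_ ?_
    · show u.1 + v.1 + f u.2 v.2 = v.1 + u.1 + f v.2 u.2
      rw [K1 u.2 v.2 h]
      abel
    · exact h
  -- central powers and divisibility
  have hpowc : ∀ (w : QZ) (n : ℕ),
      (((w, (1 : PresentedGroup (rels p)))) : QZ × PresentedGroup (rels p)) ^ (n+1)
        = ((n+1) • w + n • (f 1 1), 1) := by
    intro w n
    induction n with
    | zero => simp only [zero_add, pow_one, one_nsmul, zero_nsmul, add_zero]
    | succ n ih =>
      rw [pow_succ, ih]
      refine Prod.ext ?_ ?_
      · show (n+1) • w + n • (f 1 1) + w + f 1 1 = (n+1+1) • w + (n+1) • (f 1 1)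
        rw [succ_nsmul w (n+1), succ_nsmul (f 1 1) n]
        abel
      · exact mul_one 1
  have hdiv : ∀ e : QZ × PresentedGroup (rels p), π e = 1 → ∃ z, π z = 1 ∧ z ^ p = e := by
    intro e he
    obtain ⟨s0, hs0⟩ := QZ_div p hp.pos.ne' (e.1 - (p-1) • (f 1 1))
    refine ⟨(s0, 1), hπpair _ _, ?_⟩
    have h1 : p - 1 + 1 = p := Nat.succ_pred_eq_of_pos hp.pos
    have he2 : e.2 = 1 := (hπ e).symm.trans he
    calc ((s0, 1) : QZ × PresentedGroup (rels p)) ^ p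
        = ((s0, 1) : QZ × PresentedGroup (rels p)) ^ (p-1+1) := by rw [h1]
      _ = ((p-1+1) • s0 + (p-1) • (f 1 1), 1) := hpowc s0 (p-1)
      _ = e := by
          rw [h1, hs0]
          refine Prod.ext ?_ ?_
          · show e.1 - (p-1) • (f 1 1) + (p-1) • (f 1 1) = e.1
            abel
          · exact he2.symm
  -- relations in G
  have hrel : ∀ r ∈ rels p, PresentedGroup.mk (rels p) r = 1 := fun r hr =>
    (QuotientGroup.eq_one_iff r).mpr (Subgroup.subset_normalClosure hr)
  have hmk : ∀ x : Gen, PresentedGroup.mk (rels p) (FreeGroup.of x)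
      = (PresentedGroup.of x : PresentedGroup (rels p)) := fun _ => rfl
  have h1 := hrel (c (of .a1) (of .a) * (of Gen.b1)⁻¹) (Set.mem_insert _ _)
  have h2 := hrel (c (of .a2) (of .a) * (of Gen.b2)⁻¹) (Set.mem_insert_of_mem _ (Set.mem_insert _ _))
  have h3 := hrel (c (of .a1) (of .b1) * (of Gen.g)⁻¹) (Set.mem_insert_of_mem _ (Set.mem_insert_of_mem _ (Set.mem_insert _ _)))
  have h4 := hrel (c (of .b2) (of .a) * (of Gen.g)⁻¹) (Set.mem_insert_of_mem _ (Set.mem_insert_of_mem _ (Set.mem_insert_of_mem _ (Set.mem_insert _ _))))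
  have h5 := hrel (c (of .a) (of .b1)) (Set.mem_insert_of_mem _ (Set.mem_insert_of_mem _ (Set.mem_insert_of_mem _ (Set.mem_insert_of_mem _ (Set.mem_insert _ _)))))
  have h6 := hrel (c (of .a) (of .g)) (Set.mem_insert_of_mem _ (Set.mem_insert_of_mem _ (Set.mem_insert_of_mem _ (Set.mem_insert_of_mem _ (Set.mem_insert_of_mem _ (Set.mem_insert _ _))))))
  have h7 := hrel (c (of .a1) (of .a2)) (Set.mem_insert_of_mem _ (Set.mem_insert_of_mem _ (Set.mem_insert_of_mem _ (Set.mem_insert_of_mem _ (Set.mem_insert_of_mem _ (Set.mem_insert_of_mem _ (Set.mem_insert _ _)))))))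
  have h8 := hrel (c (of .a1) (of .b2)) (Set.mem_insert_of_mem _ (Set.mem_insert_of_mem _ (Set.mem_insert_of_mem _ (Set.mem_insert_of_mem _ (Set.mem_insert_of_mem _ (Set.mem_insert_of_mem _ (Set.mem_insert_of_mem _ (Set.mem_insert _ _))))))))
  have h9 := hrel (c (of .a1) (of .g)) (Set.mem_insert_of_mem _ (Set.mem_insert_of_mem _ (Set.mem_insert_of_mem _ (Set.mem_insert_of_mem _ (Set.mem_insert_of_mem _ (Set.mem_insert_of_mem _ (Set.mem_insert_of_mem _ (Set.mem_insert_of_mem _ (Set.mem_insert _ _)))))))))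
  have h10 := hrel (c (of .a2) (of .b1)) (Set.mem_insert_of_mem _ (Set.mem_insert_of_mem _ (Set.mem_insert_of_mem _ (Set.mem_insert_of_mem _ (Set.mem_insert_of_mem _ (Set.mem_insert_of_mem _ (Set.mem_insert_of_mem _ (Set.mem_insert_of_mem _ (Set.mem_insert_of_mem _ (Set.mem_insert _ _))))))))))
  have h11 := hrel (c (of .a2) (of .b2)) (Set.mem_insert_of_mem _ (Set.mem_insert_of_mem _ (Set.mem_insert_of_mem _ (Set.mem_insert_of_mem _ (Set.mem_insert_of_mem _ (Set.mem_insert_of_mem _ (Set.mem_insert_of_mem _ (Set.mem_insert_of_mem _ (Set.mem_insert_of_mem _ (Set.mem_insert_of_mem _ (Set.mem_insert _ _)))))))))))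
  have h12 := hrel (c (of .a2) (of .g)) (Set.mem_insert_of_mem _ (Set.mem_insert_of_mem _ (Set.mem_insert_of_mem _ (Set.mem_insert_of_mem _ (Set.mem_insert_of_mem _ (Set.mem_insert_of_mem _ (Set.mem_insert_of_mem _ (Set.mem_insert_of_mem _ (Set.mem_insert_of_mem _ (Set.mem_insert_of_mem _ (Set.mem_insert_of_mem _ (Set.mem_insert _ _))))))))))))
  have h13 := hrel (c (of .b1) (of .b2)) (Set.mem_insert_of_mem _ (Set.mem_insert_of_mem _ (Set.mem_insert_of_mem _ (Set.mem_insert_of_mem _ (Set.mem_insert_of_mem _ (Set.mem_insert_of_mem _ (Set.mem_insert_of_mem _ (Set.mem_insert_of_mem _ (Set.mem_insert_of_mem _ (Set.mem_insert_of_mem _ (Set.mem_insert_of_mem _ (Set.mem_insert_of_mem _ (Set.mem_insert _ _)))))))))))))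
  have h14 := hrel (c (of .b1) (of .g)) (Set.mem_insert_of_mem _ (Set.mem_insert_of_mem _ (Set.mem_insert_of_mem _ (Set.mem_insert_of_mem _ (Set.mem_insert_of_mem _ (Set.mem_insert_of_mem _ (Set.mem_insert_of_mem _ (Set.mem_insert_of_mem _ (Set.mem_insert_of_mem _ (Set.mem_insert_of_mem _ (Set.mem_insert_of_mem _ (Set.mem_insert_of_mem _ (Set.mem_insert_of_mem _ (Set.mem_insert _ _))))))))))))))
  have h15 := hrel (c (of .b2) (of .g)) (Set.mem_insert_of_mem _ (Set.mem_insert_of_mem _ (Set.mem_insert_of_mem _ (Set.mem_insert_of_mem _ (Set.mem_insert_of_mem _ (Set.mem_insert_of_mem _ (Set.mem_insert_of_mem _ (Set.mem_insert_of_mem _ (Set.mem_insert_of_mem _ (Set.mem_insert_of_mem _ (Set.mem_insert_of_mem _ (Set.mem_insert_of_mem _ (Set.mem_insert_of_mem _ (Set.mem_insert_of_mem _ (Set.mem_insert _ _)))))))))))))))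
  have h16 := hrel ((of Gen.a) ^ p) (Set.mem_insert_of_mem _ (Set.mem_insert_of_mem _ (Set.mem_insert_of_mem _ (Set.mem_insert_of_mem _ (Set.mem_insert_of_mem _ (Set.mem_insert_of_mem _ (Set.mem_insert_of_mem _ (Set.mem_insert_of_mem _ (Set.mem_insert_of_mem _ (Set.mem_insert_of_mem _ (Set.mem_insert_of_mem _ (Set.mem_insert_of_mem _ (Set.mem_insert_of_mem _ (Set.mem_insert_of_mem _ (Set.mem_insert_of_mem _ (Set.mem_insert _ _))))))))))))))))
  have h17 := hrel ((of Gen.a1) ^ p) (Set.mem_insert_of_mem _ (Set.mem_insert_of_mem _ (Set.mem_insert_of_mem _ (Set.mem_insert_of_mem _ (Set.mem_insert_of_mem _ (Set.mem_insert_of_mem _ (Set.mem_insert_of_mem _ (Set.mem_insert_of_mem _ (Set.mem_insert_of_mem _ (Set.mem_insert_of_mem _ (Set.mem_insert_of_mem _ (Set.mem_insert_of_mem _ (Set.mem_insert_of_mem _ (Set.mem_insert_of_mem _ (Set.mem_insert_of_mem _ (Set.mem_insert_of_mem _ (Set.mem_insert _ _)))))))))))))))))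
  have h18 := hrel ((of Gen.a2) ^ p * (of Gen.g) ^ (p.choose 3)) (Set.mem_insert_of_mem _ (Set.mem_insert_of_mem _ (Set.mem_insert_of_mem _ (Set.mem_insert_of_mem _ (Set.mem_insert_of_mem _ (Set.mem_insert_of_mem _ (Set.mem_insert_of_mem _ (Set.mem_insert_of_mem _ (Set.mem_insert_of_mem _ (Set.mem_insert_of_mem _ (Set.mem_insert_of_mem _ (Set.mem_insert_of_mem _ (Set.mem_insert_of_mem _ (Set.mem_insert_of_mem _ (Set.mem_insert_of_mem _ (Set.mem_insert_of_mem _ (Set.mem_insert_of_mem _ (Set.mem_insert _ _))))))))))))))))))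
  have h19 := hrel ((of Gen.b1) ^ p) (Set.mem_insert_of_mem _ (Set.mem_insert_of_mem _ (Set.mem_insert_of_mem _ (Set.mem_insert_of_mem _ (Set.mem_insert_of_mem _ (Set.mem_insert_of_mem _ (Set.mem_insert_of_mem _ (Set.mem_insert_of_mem _ (Set.mem_insert_of_mem _ (Set.mem_insert_of_mem _ (Set.mem_insert_of_mem _ (Set.mem_insert_of_mem _ (Set.mem_insert_of_mem _ (Set.mem_insert_of_mem _ (Set.mem_insert_of_mem _ (Set.mem_insert_of_mem _ (Set.mem_insert_of_mem _ (Set.mem_insert_of_mem _ (Set.mem_insert _ _)))))))))))))))))))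
  have h20 := hrel ((of Gen.b2) ^ p) (Set.mem_insert_of_mem _ (Set.mem_insert_of_mem _ (Set.mem_insert_of_mem _ (Set.mem_insert_of_mem _ (Set.mem_insert_of_mem _ (Set.mem_insert_of_mem _ (Set.mem_insert_of_mem _ (Set.mem_insert_of_mem _ (Set.mem_insert_of_mem _ (Set.mem_insert_of_mem _ (Set.mem_insert_of_mem _ (Set.mem_insert_of_mem _ (Set.mem_insert_of_mem _ (Set.mem_insert_of_mem _ (Set.mem_insert_of_mem _ (Set.mem_insert_of_mem _ (Set.mem_insert_of_mem _ (Set.mem_insert_of_mem _ (Set.mem_insert_of_mem _ (Set.mem_insert _ _))))))))))))))))))))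
  have h21 := hrel ((of Gen.g) ^ p) (Set.mem_insert_of_mem _ (Set.mem_insert_of_mem _ (Set.mem_insert_of_mem _ (Set.mem_insert_of_mem _ (Set.mem_insert_of_mem _ (Set.mem_insert_of_mem _ (Set.mem_insert_of_mem _ (Set.mem_insert_of_mem _ (Set.mem_insert_of_mem _ (Set.mem_insert_of_mem _ (Set.mem_insert_of_mem _ (Set.mem_insert_of_mem _ (Set.mem_insert_of_mem _ (Set.mem_insert_of_mem _ (Set.mem_insert_of_mem _ (Set.mem_insert_of_mem _ (Set.mem_insert_of_mem _ (Set.mem_insert_of_mem _ (Set.mem_insert_of_mem _ (Set.mem_insert_of_mem _ (rfl)))))))))))))))))))))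
  simp only [c, _root_.map_mul, _root_.map_inv, _root_.map_pow, hmk] at h1 h2 h3 h4 h5 h6 h7 h8 h9 h10 h11 h12 h13 h14 h15 h16 h17 h18 h19 h20 h21
  have g1 := eqK_of_rel _ _ _ h1
  have g2 := eqK_of_rel _ _ _ h2
  have g3 := eqK_of_rel _ _ _ h3
  have g4 := eqK_of_rel _ _ _ h4
  have gc5 := comm_of_rel _ _ h5
  have gc6 := comm_of_rel _ _ h6
  have gc7 := comm_of_rel _ _ h7
  have gc8 := comm_of_rel _ _ h8
  have gc9 := comm_of_rel _ _ h9
  have gc10 := comm_of_rel _ _ h10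
  have gc11 := comm_of_rel _ _ h11
  have gc12 := comm_of_rel _ _ h12
  have gc13 := comm_of_rel _ _ h13
  have gc14 := comm_of_rel _ _ h14
  have gc15 := comm_of_rel _ _ h15
  -- lift of a with A^p = 1
  obtain ⟨A0, hA0⟩ : ∃ t : QZ × PresentedGroup (rels p),
      t = ((0 : QZ), (PresentedGroup.of Gen.a : PresentedGroup (rels p))) := ⟨_, rfl⟩
  obtain ⟨zA, hzA1, hzAp⟩ := hdiv (A0 ^ p)
    (by rw [_root_.map_pow, hA0, hπpair]; exact h16)
  obtain ⟨A, hAdef⟩ : ∃ t, t = A0 * zA⁻¹ := ⟨_, rfl⟩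
  have hAsnd : π A = (PresentedGroup.of Gen.a : PresentedGroup (rels p)) := by
    rw [hAdef, _root_.map_mul, _root_.map_inv, hA0, hπpair, hzA1, inv_one, mul_one]
  have hCzA : ∀ v, zA⁻¹ * v = v * zA⁻¹ := fun v =>
    C zA⁻¹ v (by rw [_root_.map_inv, hzA1, inv_one, one_mul, mul_one])
  have hAp : A ^ p = 1 := by
    have hcm : Commute A0 zA⁻¹ := (hCzA A0).symm
    rw [hAdef, hcm.mul_pow, inv_pow, hzAp, mul_inv_cancel]
  -- lift of a1 with A1^p = 1
  obtain ⟨A10, hA10⟩ : ∃ t : QZ × PresentedGroup (rels p),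
      t = ((0 : QZ), (PresentedGroup.of Gen.a1 : PresentedGroup (rels p))) := ⟨_, rfl⟩
  obtain ⟨zB, hzB1, hzBp⟩ := hdiv (A10 ^ p)
    (by rw [_root_.map_pow, hA10, hπpair]; exact h17)
  obtain ⟨A1, hA1def⟩ : ∃ t, t = A10 * zB⁻¹ := ⟨_, rfl⟩
  have hA1snd : π A1 = (PresentedGroup.of Gen.a1 : PresentedGroup (rels p)) := by
    rw [hA1def, _root_.map_mul, _root_.map_inv, hA10, hπpair, hzB1, inv_one, mul_one]
  have hCzB : ∀ v, zB⁻¹ * v = v * zB⁻¹ := fun v =>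
    C zB⁻¹ v (by rw [_root_.map_inv, hzB1, inv_one, one_mul, mul_one])
  have hA1p : A1 ^ p = 1 := by
    have hcm : Commute A10 zB⁻¹ := (hCzB A10).symm
    rw [hA1def, hcm.mul_pow, inv_pow, hzBp, mul_inv_cancel]
  -- B1 and Γ
  obtain ⟨B1, hB1def⟩ : ∃ t : QZ × PresentedGroup (rels p),
      t = A1⁻¹ * A⁻¹ * A1 * A := ⟨_, rfl⟩
  have hB1snd : π B1 = (PresentedGroup.of Gen.b1 : PresentedGroup (rels p)) := by
    rw [hB1def]
    simp only [_root_.map_mul, _root_.map_inv, hA1snd, hAsnd]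
    exact g1
  obtain ⟨Γ, hΓdef⟩ : ∃ t : QZ × PresentedGroup (rels p),
      t = A1⁻¹ * B1⁻¹ * A1 * B1 := ⟨_, rfl⟩
  have hΓsnd : π Γ = (PresentedGroup.of Gen.g : PresentedGroup (rels p)) := by
    rw [hΓdef]
    simp only [_root_.map_mul, _root_.map_inv, hA1snd, hB1snd]
    exact g3
  -- lift of a2 with A2^p * Γ^C(p,3) = 1
  obtain ⟨A20, hA20⟩ : ∃ t : QZ × PresentedGroup (rels p),
      t = ((0 : QZ), (PresentedGroup.of Gen.a2 : PresentedGroup (rels p))) := ⟨_, rfl⟩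
  obtain ⟨zC, hzC1, hzCp⟩ := hdiv (A20 ^ p * Γ ^ (p.choose 3))
    (by rw [_root_.map_mul, _root_.map_pow, _root_.map_pow, hΓsnd, hA20, hπpair]; exact h18)
  obtain ⟨A2, hA2def⟩ : ∃ t, t = A20 * zC⁻¹ := ⟨_, rfl⟩
  have hA2snd : π A2 = (PresentedGroup.of Gen.a2 : PresentedGroup (rels p)) := by
    rw [hA2def, _root_.map_mul, _root_.map_inv, hA20, hπpair, hzC1, inv_one, mul_one]
  have hCzC : ∀ v, zC⁻¹ * v = v * zC⁻¹ := fun v =>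
    C zC⁻¹ v (by rw [_root_.map_inv, hzC1, inv_one, one_mul, mul_one])
  have hA2rel : A2 ^ p * Γ ^ (p.choose 3) = 1 := by
    have hcm : Commute A20 zC⁻¹ := (hCzC A20).symm
    have hswap : (zC⁻¹) ^ p * Γ ^ (p.choose 3) = Γ ^ (p.choose 3) * (zC⁻¹) ^ p :=
      C _ _ (by
        rw [_root_.map_pow, _root_.map_pow, _root_.map_inv, hzC1, inv_one, one_pow,
          one_mul, mul_one])
    rw [hA2def, hcm.mul_pow, mul_assoc, hswap, ← mul_assoc, inv_pow, hzCp, mul_inv_cancel]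
  -- B2 and Δ
  obtain ⟨B2, hB2def⟩ : ∃ t : QZ × PresentedGroup (rels p),
      t = A2⁻¹ * A⁻¹ * A2 * A := ⟨_, rfl⟩
  have hB2snd : π B2 = (PresentedGroup.of Gen.b2 : PresentedGroup (rels p)) := by
    rw [hB2def]
    simp only [_root_.map_mul, _root_.map_inv, hA2snd, hAsnd]
    exact g2
  obtain ⟨Δ, hΔdef⟩ : ∃ t : QZ × PresentedGroup (rels p),
      t = B2⁻¹ * A⁻¹ * B2 * A := ⟨_, rfl⟩
  have hΔsnd : π Δ = (PresentedGroup.of Gen.g : PresentedGroup (rels p)) := by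
    rw [hΔdef]
    simp only [_root_.map_mul, _root_.map_inv, hB2snd, hAsnd]
    exact g4
  -- commuting lifts from commuting images
  have eAB1 : A * B1 = B1 * A := C A B1 (by rw [hAsnd, hB1snd]; exact gc5)
  have eAΓ : A * Γ = Γ * A := C A Γ (by rw [hAsnd, hΓsnd]; exact gc6)
  have eA1A2 : A1 * A2 = A2 * A1 := C A1 A2 (by rw [hA1snd, hA2snd]; exact gc7)
  have eA1B2 : A1 * B2 = B2 * A1 := C A1 B2 (by rw [hA1snd, hB2snd]; exact gc8)
  have eA1Γ : A1 * Γ = Γ * A1 := C A1 Γ (by rw [hA1snd, hΓsnd]; exact gc9)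
  have eA2B1 : A2 * B1 = B1 * A2 := C A2 B1 (by rw [hA2snd, hB1snd]; exact gc10)
  have eA2B2 : A2 * B2 = B2 * A2 := C A2 B2 (by rw [hA2snd, hB2snd]; exact gc11)
  have eA2Γ : A2 * Γ = Γ * A2 := C A2 Γ (by rw [hA2snd, hΓsnd]; exact gc12)
  have eB1B2 : B1 * B2 = B2 * B1 := C B1 B2 (by rw [hB1snd, hB2snd]; exact gc13)
  have eB1Γ : B1 * Γ = Γ * B1 := C B1 Γ (by rw [hB1snd, hΓsnd]; exact gc14)
  have eB2Γ : B2 * Γ = Γ * B2 := C B2 Γ (by rw [hB2snd, hΓsnd]; exact gc15)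
  have eΔB1 : Δ * B1 = B1 * Δ := C Δ B1 (by rw [hΔsnd, hB1snd]; exact gc14.symm)
  have eΔA : Δ * A = A * Δ := C Δ A (by rw [hΔsnd, hAsnd]; exact gc6.symm)
  have eB2Δ : B2 * Δ = Δ * B2 := C B2 Δ (by rw [hB2snd, hΔsnd]; exact gc15)
  -- the pair (b2*b1, a1*a) commutes in G, hence its lifts commute
  have hpairA := Lmain _ _ _ _ _ _ (xy_of_K _ _ _ g3) (xy_of_K _ _ _ g4)
    gc8.symm gc6.symm gc5.symm gc14.symm
  have ePairE : B2 * B1 * (A1 * A) = A1 * A * (B2 * B1) :=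
    C (B2 * B1) (A1 * A) (by
      rw [_root_.map_mul, _root_.map_mul, hB2snd, hB1snd, hA1snd, hAsnd, hpairA]
      simp)
  -- the relations among the lifts
  have hB1p : B1 ^ p = 1 :=
    L1 p A A1 B1 (K_conj _ _ _ hB1def.symm) eAB1.symm hAp
  have hΓp : Γ ^ p = 1 :=
    L1 p B1 A1 Γ (K_conj _ _ _ hΓdef.symm) eB1Γ.symm hB1p
  have hΔΓ : Δ = Γ :=
    Lkey A A1 B1 B2 Γ Δ (xy_of_K _ _ _ hΓdef.symm) (xy_of_K _ _ _ hΔdef.symm)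
      eA1B2.symm eAΓ.symm eAB1.symm eΔB1 ePairE
  have hΔp : Δ ^ p = 1 := by rw [hΔΓ]; exact hΓp
  have hB2Δ : B2 ^ p * Δ ^ (p.choose 2) = 1 :=
    L2 p A A2 B2 Δ (K_conj _ _ _ hB2def.symm) (K_conj _ _ _ hΔdef.symm) eB2Δ eΔA hAp
  have hchoose2 : p ∣ p.choose 2 := Nat.Prime.dvd_choose_self hp (by norm_num) (by omega)
  have hΔc2 : Δ ^ (p.choose 2) = 1 := by
    obtain ⟨m, hm⟩ := hchoose2
    rw [hm, pow_mul, hΔp, one_pow]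
  have hB2p : B2 ^ p = 1 := by rwa [hΔc2, mul_one] at hB2Δ
  -- the images of the relators are trivial
  have F1 : A1⁻¹ * A⁻¹ * A1 * A * B1⁻¹ = 1 := by rw [← hB1def]; group
  have F2 : A2⁻¹ * A⁻¹ * A2 * A * B2⁻¹ = 1 := by rw [← hB2def]; group
  have F3 : A1⁻¹ * B1⁻¹ * A1 * B1 * Γ⁻¹ = 1 := by rw [← hΓdef]; group
  have F4 : B2⁻¹ * A⁻¹ * B2 * A * Γ⁻¹ = 1 := by rw [← hΔΓ, ← hΔdef]; group
  have F5 : A⁻¹ * B1⁻¹ * A * B1 = 1 := rel_of_comm _ _ eAB1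
  have F6 : A⁻¹ * Γ⁻¹ * A * Γ = 1 := rel_of_comm _ _ eAΓ
  have F7 : A1⁻¹ * A2⁻¹ * A1 * A2 = 1 := rel_of_comm _ _ eA1A2
  have F8 : A1⁻¹ * B2⁻¹ * A1 * B2 = 1 := rel_of_comm _ _ eA1B2
  have F9 : A1⁻¹ * Γ⁻¹ * A1 * Γ = 1 := rel_of_comm _ _ eA1Γ
  have F10 : A2⁻¹ * B1⁻¹ * A2 * B1 = 1 := rel_of_comm _ _ eA2B1
  have F11 : A2⁻¹ * B2⁻¹ * A2 * B2 = 1 := rel_of_comm _ _ eA2B2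
  have F12 : A2⁻¹ * Γ⁻¹ * A2 * Γ = 1 := rel_of_comm _ _ eA2Γ
  have F13 : B1⁻¹ * B2⁻¹ * B1 * B2 = 1 := rel_of_comm _ _ eB1B2
  have F14 : B1⁻¹ * Γ⁻¹ * B1 * Γ = 1 := rel_of_comm _ _ eB1Γ
  have F15 : B2⁻¹ * Γ⁻¹ * B2 * Γ = 1 := rel_of_comm _ _ eB2Γ
  have hrels : ∀ r ∈ rels p,
      FreeGroup.lift (fun x => Gen.rec (motive := fun _ => QZ × PresentedGroup (rels p))
        A A1 A2 B1 B2 Γ x) r = 1 := by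
    intro r hr
    simp only [rels, Set.mem_insert_iff, Set.mem_singleton_iff] at hr
    rcases hr with rfl|rfl|rfl|rfl|rfl|rfl|rfl|rfl|rfl|rfl|rfl|rfl|rfl|rfl|rfl|rfl|rfl|rfl|rfl|rfl|rfl
    · simp only [c, _root_.map_mul, _root_.map_inv, _root_.map_pow, FreeGroup.lift_apply_of]
      exact F1
    · simp only [c, _root_.map_mul, _root_.map_inv, _root_.map_pow, FreeGroup.lift_apply_of]
      exact F2
    · simp only [c, _root_.map_mul, _root_.map_inv, _root_.map_pow, FreeGroup.lift_apply_of]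
      exact F3
    · simp only [c, _root_.map_mul, _root_.map_inv, _root_.map_pow, FreeGroup.lift_apply_of]
      exact F4
    · simp only [c, _root_.map_mul, _root_.map_inv, _root_.map_pow, FreeGroup.lift_apply_of]
      exact F5
    · simp only [c, _root_.map_mul, _root_.map_inv, _root_.map_pow, FreeGroup.lift_apply_of]
      exact F6
    · simp only [c, _root_.map_mul, _root_.map_inv, _root_.map_pow, FreeGroup.lift_apply_of]
      exact F7
    · simp only [c, _root_.map_mul, _root_.map_inv, _root_.map_pow, FreeGroup.lift_apply_of]
      exact F8
    · simp only [c, _root_.map_mul, _root_.map_inv, _root_.map_pow, FreeGroup.lift_apply_of]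
      exact F9
    · simp only [c, _root_.map_mul, _root_.map_inv, _root_.map_pow, FreeGroup.lift_apply_of]
      exact F10
    · simp only [c, _root_.map_mul, _root_.map_inv, _root_.map_pow, FreeGroup.lift_apply_of]
      exact F11
    · simp only [c, _root_.map_mul, _root_.map_inv, _root_.map_pow, FreeGroup.lift_apply_of]
      exact F12
    · simp only [c, _root_.map_mul, _root_.map_inv, _root_.map_pow, FreeGroup.lift_apply_of]
      exact F13
    · simp only [c, _root_.map_mul, _root_.map_inv, _root_.map_pow, FreeGroup.lift_apply_of]
      exact F14
    · simp only [c, _root_.map_mul, _root_.map_inv, _root_.map_pow, FreeGroup.lift_apply_of]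
      exact F15
    · simp only [c, _root_.map_mul, _root_.map_inv, _root_.map_pow, FreeGroup.lift_apply_of]
      exact hAp
    · simp only [c, _root_.map_mul, _root_.map_inv, _root_.map_pow, FreeGroup.lift_apply_of]
      exact hA1p
    · simp only [c, _root_.map_mul, _root_.map_inv, _root_.map_pow, FreeGroup.lift_apply_of]
      exact hA2rel
    · simp only [c, _root_.map_mul, _root_.map_inv, _root_.map_pow, FreeGroup.lift_apply_of]
      exact hB1p
    · simp only [c, _root_.map_mul, _root_.map_inv, _root_.map_pow, FreeGroup.lift_apply_of]
      exact hB2p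
    · simp only [c, _root_.map_mul, _root_.map_inv, _root_.map_pow, FreeGroup.lift_apply_of]
      exact hΓp
  -- the splitting homomorphism
  obtain ⟨s, hs_of⟩ : ∃ s' : PresentedGroup (rels p) →* QZ × PresentedGroup (rels p),
      ∀ x : Gen, s' (PresentedGroup.of x)
        = Gen.rec (motive := fun _ => QZ × PresentedGroup (rels p)) A A1 A2 B1 B2 Γ x :=
    ⟨PresentedGroup.toGroup hrels, fun x => PresentedGroup.toGroup.of hrels⟩
  have hcomp : π.comp s = MonoidHom.id (PresentedGroup (rels p)) := by
    apply PresentedGroup.ext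
    intro x
    show π (s (PresentedGroup.of x)) = PresentedGroup.of x
    rw [hs_of]
    cases x
    · exact hAsnd
    · exact hA1snd
    · exact hA2snd
    · exact hB1snd
    · exact hB2snd
    · exact hΓsnd
  have hsec : ∀ y : PresentedGroup (rels p), π (s y) = y := by
    intro y
    have h := DFunLike.congr_fun hcomp y
    simpa using h
  -- conclude: f is a coboundary
  refine ⟨fun y => - (s y).1, ?_⟩
  intro x y
  have e : (s (x * y)).1 = (s x).1 + (s y).1 + f x y := by
    rw [_root_.map_mul, fstmul,
      show (s x).2 = x from (hπ (s x)).symm.trans (hsec x),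
      show (s y).2 = y from (hπ (s y)).symm.trans (hsec y)]
  show f x y = - (s y).1 - (- (s (x * y)).1) + (- (s x).1)
  rw [e]
  abel

end Stmt9
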